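/- Suppose η_1 = η_2 (the case a = 0, i.e., λ_1 - μ_1 = μ_2 - λ_2 μ_1/λ_1). Let y(t) = e^{t(λ_1 - μ_1)/2} max{|x_1(t) - (λ_1 - μ_1)/λ_1|, x_2(t)}. If y(0) ≤ (λ_1 - μ_1)/(32(λ_1 + λ_2)), then for all t ≥ 0, |x_1(t) - (λ_1 - μ_1)/λ_1| ≤ 4 y(0) e^{-t(λ_1 - μ_1)/2} and x_2(t) ≤ 4 y(0) e^{-t(λ_1 - μ_1)/2}. -/

import Mathlib

open Set Filter Real Topology

private lemma slope_abs_tendsto {u : ℝ → ℝ} {x d : ℝ} (hu : HasDerivAt u d x) :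
    Filter.Tendsto (slope (fun z => |u z|) x) (𝓝[>] x)
      (𝓝 (if u x = 0 then |d| else if 0 < u x then d else -d)) := by
  have hmono : 𝓝[>] x ≤ 𝓝[≠] x := nhdsWithin_mono _ fun z hz => ne_of_gt hz
  rcases lt_trichotomy (u x) 0 with h | h | h
  · rw [if_neg (ne_of_lt h), if_neg (not_lt.mpr h.le)]
    have hev : ∀ᶠ z in 𝓝 x, |u z| = -u z := by
      filter_upwards [hu.continuousAt.eventually_lt_const h] with z hz using abs_of_neg hz
    have hslope : Tendsto (slope (fun z => -u z) x) (𝓝[≠] x) (𝓝 (-d)) :=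
      hasDerivAt_iff_tendsto_slope.mp hu.neg
    refine ((hslope.mono_left hmono).congr' ?_)
    filter_upwards [nhdsWithin_le_nhds hev] with z hz
    simp only [slope_def_field, hz, abs_of_neg h]
  · rw [if_pos h]
    have hslope : Tendsto (fun z => |slope u x z|) (𝓝[≠] x) (𝓝 |d|) :=
      (hasDerivAt_iff_tendsto_slope.mp hu).abs
    refine ((hslope.mono_left hmono).congr' ?_)
    filter_upwards [self_mem_nhdsWithin] with z (hz : x < z)
    simp only [slope_def_field, h, sub_zero, abs_zero, abs_div, abs_of_pos (sub_pos.mpr hz)]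
  · rw [if_neg (ne_of_gt h), if_pos h]
    have hev : ∀ᶠ z in 𝓝 x, |u z| = u z := by
      filter_upwards [hu.continuousAt.eventually_const_lt h] with z hz using abs_of_pos hz
    have hslope : Tendsto (slope u x) (𝓝[≠] x) (𝓝 d) :=
      hasDerivAt_iff_tendsto_slope.mp hu
    refine ((hslope.mono_left hmono).congr' ?_)
    filter_upwards [nhdsWithin_le_nhds hev] with z hz
    simp only [slope_def_field, hz, abs_of_pos h]

private lemma slope_max_tendsto {f g : ℝ → ℝ} {x df dg : ℝ}
    (hf : Filter.Tendsto (slope f x) (𝓝[>] x) (𝓝 df))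
    (hg : Filter.Tendsto (slope g x) (𝓝[>] x) (𝓝 dg))
    (hfc : ContinuousAt f x) (hgc : ContinuousAt g x) :
    Filter.Tendsto (slope (fun z => max (f z) (g z)) x) (𝓝[>] x)
      (𝓝 (if g x < f x then df else if f x < g x then dg else max df dg)) := by
  rcases lt_trichotomy (f x) (g x) with h | h | h
  · rw [if_neg (not_lt.mpr h.le), if_pos h]
    have hev : ∀ᶠ z in 𝓝 x, max (f z) (g z) = g z := by
      filter_upwards [hfc.eventually_lt hgc h] with z hz using max_eq_right hz.le
    refine hg.congr' ?_
    filter_upwards [nhdsWithin_le_nhds hev] with z hz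
    simp only [slope_def_field, hz, max_eq_right h.le]
  · rw [if_neg (not_lt.mpr h.le), if_neg (not_lt.mpr h.ge)]
    refine (hf.max hg).congr' ?_
    filter_upwards [self_mem_nhdsWithin] with z (hz : x < z)
    have hpos : (0:ℝ) ≤ z - x := (sub_pos.mpr hz).le
    simp only [slope_def_field, ← max_div_div_right hpos, max_eq_left h.ge,
      ← max_sub_sub_right, ← h, max_self]
  · rw [if_pos h]
    have hev : ∀ᶠ z in 𝓝 x, max (f z) (g z) = f z := by
      filter_upwards [hgc.eventually_lt hfc h] with z hz using max_eq_left hz.le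
    refine hf.congr' ?_
    filter_upwards [nhdsWithin_le_nhds hev] with z hz
    simp only [slope_def_field, hz, max_eq_left h.le]

set_option maxHeartbeats 1600000 in
private lemma sis_aux_upos (lam1 lam2 mu1 b uu Bx : ℝ)
    (hη : 0 < lam1 - mu1) (hlam1 : 0 < lam1)
    (hbnn : 0 ≤ b) (hBx : 0 < Bx) (huu : uu = Bx) :
    -(lam1 - mu1) * uu - (lam1 - mu1) * b - lam1 * uu * (uu + b)
      < -((lam1 - mu1) / 2) * Bx := by
  rw [huu]
  nlinarith [mul_pos hη hBx, mul_nonneg hη.le hbnn,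
    mul_nonneg (mul_nonneg hlam1.le hBx.le) (by linarith : (0:ℝ) ≤ Bx + b)]

private lemma sis_aux_uneg (lam1 lam2 mu1 b uu Bx : ℝ)
    (hη : 0 < lam1 - mu1) (hlam1 : 0 < lam1)
    (hbnn : 0 ≤ b) (hBx : 0 < Bx) (huu : uu = -Bx)
    (hav : 4 * b ≤ Bx) (hl1B : lam1 * Bx ≤ 5 * (lam1 - mu1) / 32) :
    -(-(lam1 - mu1) * uu - (lam1 - mu1) * b - lam1 * uu * (uu + b))
      < -((lam1 - mu1) / 2) * Bx := by
  rw [huu]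
  nlinarith [mul_pos hη hBx,
    mul_le_mul_of_nonneg_left hav hη.le,
    mul_le_mul_of_nonneg_right hl1B hBx.le,
    mul_nonneg (mul_nonneg hlam1.le hBx.le) hbnn]

private lemma sis_aux_v (lam1 lam2 mu1 b uu Bx : ℝ)
    (hη : 0 < lam1 - mu1) (hlam2 : 0 < lam2)
    (hbnn : 0 ≤ b) (hBx : 0 < Bx) (h4v : 4 * b = Bx)
    (hau1 : -Bx ≤ uu)
    (hl2B : lam2 * Bx ≤ 5 * (lam1 - mu1) / 32) :
    4 * (-(lam1 - mu1) * b - lam2 * b * (uu + b)) < -((lam1 - mu1) / 2) * Bx := by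
  have hηb : (lam1 - mu1) * (4 * b) = (lam1 - mu1) * Bx := by rw [h4v]
  nlinarith [mul_pos hη hBx, hηb,
    mul_le_mul_of_nonneg_left hau1 (mul_nonneg hlam2.le hbnn),
    mul_le_mul_of_nonneg_right (mul_le_mul_of_nonneg_left (le_of_eq h4v) hlam2.le) hBx.le,
    mul_le_mul_of_nonneg_right hl2B hBx.le,
    mul_nonneg (mul_nonneg hlam2.le hbnn) hbnn]

/-- Exponential decay in the repeated-eigenvalue case `η₁ = η₂` (`a = 0`): if
`y(0) = max{|x₁(0) - (λ₁-μ₁)/λ₁|, x₂(0)} ≤ (λ₁-μ₁)/(32(λ₁+λ₂))` then for all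
`t ≥ 0`, `|x₁(t) - (λ₁-μ₁)/λ₁| ≤ 4y(0)e^{-t(λ₁-μ₁)/2}` and `x₂(t) ≤ 4y(0)e^{-t(λ₁-μ₁)/2}`. -/
theorem sis_repeated_eigenvalue_decay
    (lam1 lam2 mu1 mu2 : ℝ)
    (hlam2 : 0 < lam2) (hmu2 : 0 < mu2) (hmu1 : 0 < mu1) (hlt : mu1 < lam1)
    (heq : lam1 - mu1 = mu2 - lam2 * mu1 / lam1)
    (x1 x2 : ℝ → ℝ) (hx2nn : ∀ t : ℝ, 0 ≤ x2 t)
    (hode1 : ∀ t : ℝ, HasDerivAt x1 (lam1 * x1 t * (1 - x1 t - x2 t) - mu1 * x1 t) t)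
    (hode2 : ∀ t : ℝ, HasDerivAt x2 (lam2 * x2 t * (1 - x1 t - x2 t) - mu2 * x2 t) t)
    (hy0 : max |x1 0 - (lam1 - mu1) / lam1| (x2 0) ≤ (lam1 - mu1) / (32 * (lam1 + lam2))) :
    ∀ t : ℝ, 0 ≤ t →
      |x1 t - (lam1 - mu1) / lam1|
          ≤ 4 * max |x1 0 - (lam1 - mu1) / lam1| (x2 0) * Real.exp (-t * (lam1 - mu1) / 2) ∧
      x2 t ≤ 4 * max |x1 0 - (lam1 - mu1) / lam1| (x2 0) * Real.exp (-t * (lam1 - mu1) / 2) := by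
  have hlam1 : 0 < lam1 := hmu1.trans hlt
  have hη : 0 < lam1 - mu1 := sub_pos.mpr hlt
  have hL : 0 < lam1 + lam2 := by linarith
  set u : ℝ → ℝ := fun z => x1 z - (lam1 - mu1) / lam1 with hu_def
  set U' : ℝ → ℝ := fun z => -(lam1 - mu1) * u z - (lam1 - mu1) * x2 z
      - lam1 * u z * (u z + x2 z) with hU'_def
  set V' : ℝ → ℝ := fun z => -(lam1 - mu1) * x2 z - lam2 * x2 z * (u z + x2 z) with hV'_def
  have hu' : ∀ s : ℝ, HasDerivAt u (U' s) s := by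
    intro s
    have h := (hode1 s).sub_const ((lam1 - mu1) / lam1)
    refine h.congr_deriv ?_
    simp only [hU'_def, hu_def]
    field_simp
    ring
  have hv' : ∀ s : ℝ, HasDerivAt x2 (V' s) s := by
    intro s
    have heq' : lam1 * (lam1 - mu1) = lam1 * mu2 - lam2 * mu1 := by
      field_simp at heq; linarith
    have h := hode2 s
    convert h using 1
    simp only [hV'_def, hu_def]
    field_simp
    linear_combination (-(x2 s)) * heq'
  have huc : Continuous u := by
    exact continuous_iff_continuousAt.mpr fun z => ((hu' z).differentiableAt).continuousAt
  have hvc : Continuous x2 := by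
    exact continuous_iff_continuousAt.mpr fun z => ((hv' z).differentiableAt).continuousAt
  set y0 : ℝ := max |x1 0 - (lam1 - mu1) / lam1| (x2 0) with hy0_def
  have hy0nn : 0 ≤ y0 := le_trans (abs_nonneg _) (le_max_left _ _)
  -- key bootstrap estimate
  have key : ∀ ε : ℝ, 0 < ε → ε ≤ (lam1 - mu1) / (32 * (lam1 + lam2)) → ∀ s : ℝ, 0 ≤ s →
      max |u s| (4 * x2 s) ≤ (4 * y0 + ε) * Real.exp (-((lam1 - mu1) / 2) * s) := by
    intro ε hε hεle
    set δ : ℝ := 4 * y0 + ε with hδ_def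
    have hδpos : 0 < δ := by positivity
    have hδle : δ ≤ 5 * (lam1 - mu1) / (32 * (lam1 + lam2)) := by
      have h1 : y0 ≤ (lam1 - mu1) / (32 * (lam1 + lam2)) := hy0
      have h2 : 4 * ((lam1 - mu1) / (32 * (lam1 + lam2))) + (lam1 - mu1) / (32 * (lam1 + lam2))
          = 5 * (lam1 - mu1) / (32 * (lam1 + lam2)) := by ring
      linarith
    have hLδ : (lam1 + lam2) * δ ≤ 5 * (lam1 - mu1) / 32 := by
      have h5 : (lam1 + lam2) * (5 * (lam1 - mu1) / (32 * (lam1 + lam2)))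
          = 5 * (lam1 - mu1) / 32 := by field_simp
      calc (lam1 + lam2) * δ ≤ (lam1 + lam2) * (5 * (lam1 - mu1) / (32 * (lam1 + lam2))) :=
            mul_le_mul_of_nonneg_left hδle hL.le
        _ = 5 * (lam1 - mu1) / 32 := h5
    set B : ℝ → ℝ := fun z => δ * Real.exp (-((lam1 - mu1) / 2) * z) with hB_def
    have hBderiv : ∀ z : ℝ, HasDerivAt B (-((lam1 - mu1) / 2) * B z) z := by
      intro z
      have h1 : HasDerivAt (fun z : ℝ => -((lam1 - mu1) / 2) * z) (-((lam1 - mu1) / 2)) z := by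
        simpa using (hasDerivAt_id z).const_mul (-((lam1 - mu1) / 2))
      have h2 := (h1.exp).const_mul δ
      refine h2.congr_deriv ?_
      simp only [hB_def]
      ring
    have hBpos : ∀ z : ℝ, 0 < B z := fun z => by positivity
    set f : ℝ → ℝ := fun z => max |u z| (4 * x2 z) with hf_def
    set DU : ℝ → ℝ := fun z => if u z = 0 then |U' z| else if 0 < u z then U' z else -U' z
      with hDU_def
    set F' : ℝ → ℝ := fun z =>
      if 4 * x2 z < |u z| then DU z
      else if |u z| < 4 * x2 z then 4 * V' z
      else max (DU z) (4 * V' z) with hF'_def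
    intro s hs
    have hfB : ∀ x ∈ Icc 0 s, f x ≤ B x := by
      apply image_le_of_liminf_slope_right_lt_deriv_boundary
        (f := f) (f' := F') (B := B) (B' := fun z => -((lam1 - mu1) / 2) * B z)
      · exact (((continuous_abs.comp huc).max (continuous_const.mul hvc)).continuousOn)
      · -- liminf of slope of f is at most F'
        intro x _ r hr
        have h4v : HasDerivAt (fun z => 4 * x2 z) (4 * V' x) x := (hv' x).const_mul 4
        have hg : Tendsto (slope (fun z => 4 * x2 z) x) (𝓝[>] x) (𝓝 (4 * V' x)) :=
          (hasDerivAt_iff_tendsto_slope.mp h4v).mono_left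
            (nhdsWithin_mono _ fun z hz => ne_of_gt hz)
        have htend := slope_max_tendsto (slope_abs_tendsto (hu' x)) hg
          ((continuous_abs.comp huc).continuousAt) ((continuous_const.mul hvc).continuousAt)
        have hFx : Tendsto (slope f x) (𝓝[>] x) (𝓝 (F' x)) := htend
        exact ((hFx.eventually_lt_const hr)).frequently
      · -- initial condition
        have h1 : |u 0| ≤ 4 * y0 := by
          have := le_max_left |x1 0 - (lam1 - mu1) / lam1| (x2 0)
          simp only [hu_def]
          linarith [hy0nn]
        have h2 : 4 * x2 0 ≤ 4 * y0 := by
          have := le_max_right |x1 0 - (lam1 - mu1) / lam1| (x2 0)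
          linarith
        have hB0 : B 0 = δ := by simp [hB_def]
        simp only [hf_def, hB0]
        have : max |u 0| (4 * x2 0) ≤ 4 * y0 := max_le h1 h2
        simp only [hδ_def]
        linarith
      · exact hBderiv
      · -- the crucial bound at touching points
        intro x hx hfx
        have hxnn : 0 ≤ x := hx.1
        have hBx : 0 < B x := hBpos x
        have hBxδ : B x ≤ δ := by
          have : Real.exp (-((lam1 - mu1) / 2) * x) ≤ 1 := by
            rw [← Real.exp_zero]
            apply Real.exp_le_exp.mpr
            nlinarith
          calc B x = δ * Real.exp (-((lam1 - mu1) / 2) * x) := rfl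
            _ ≤ δ * 1 := mul_le_mul_of_nonneg_left this hδpos.le
            _ = δ := mul_one δ
        have hau : |u x| ≤ B x := hfx ▸ le_max_left _ _
        have hav : 4 * x2 x ≤ B x := hfx ▸ le_max_right _ _
        have hbnn : 0 ≤ x2 x := hx2nn x
        have hl1B : lam1 * B x ≤ 5 * (lam1 - mu1) / 32 := by
          nlinarith [mul_le_mul_of_nonneg_left hBxδ hlam1.le, mul_nonneg hlam2.le hδpos.le, hLδ]
        have hl2B : lam2 * B x ≤ 5 * (lam1 - mu1) / 32 := by
          nlinarith [mul_le_mul_of_nonneg_left hBxδ hlam2.le, mul_nonneg hlam1.le hδpos.le, hLδ]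
        have hauB : -B x ≤ u x ∧ u x ≤ B x := abs_le.mp hau
        -- bound for the |u|-branch (valid whenever |u x| = B x)
        have hDUbound : |u x| = B x → DU x < -((lam1 - mu1) / 2) * B x := by
          intro habs
          have hune : u x ≠ 0 := by
            intro h0; rw [h0, abs_zero] at habs; exact absurd habs.symm (ne_of_gt hBx)
          simp only [hDU_def, if_neg hune]
          rcases lt_or_gt_of_ne hune with hneg | hpos
          · rw [if_neg (not_lt.mpr hneg.le)]
            have hux : u x = -B x := by
              rw [abs_of_neg hneg] at habs; linarith
            simp only [hU'_def]
            exact sis_aux_uneg lam1 lam2 mu1 (x2 x) (u x) (B x) hη hlam1 hbnn hBx hux hav hl1B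
          · rw [if_pos hpos]
            have hux : u x = B x := by rw [abs_of_pos hpos] at habs; exact habs
            simp only [hU'_def]
            exact sis_aux_upos lam1 lam2 mu1 (x2 x) (u x) (B x) hη hlam1 hbnn hBx hux
        -- bound for the v-branch (valid whenever 4 * x2 x = B x)
        have hDVbound : 4 * x2 x = B x → 4 * V' x < -((lam1 - mu1) / 2) * B x := by
          intro h4v
          simp only [hV'_def]
          exact sis_aux_v lam1 lam2 mu1 (x2 x) (u x) (B x) hη hlam2 hbnn hBx h4v hauB.1 hl2B
        simp only [hF'_def]
        split_ifs with h1 h2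
        · -- 4 v < |u| : then |u x| = B x
          apply hDUbound
          have : f x = |u x| := max_eq_left h1.le
          rw [← this, hfx]
        · -- |u| < 4 v : then 4 x2 x = B x
          apply hDVbound
          have : f x = 4 * x2 x := max_eq_right h2.le
          rw [← this, hfx]
        · -- tie
          have heqc : |u x| = 4 * x2 x := le_antisymm (not_lt.mp h1) (not_lt.mp h2)
          have hfu : f x = |u x| := max_eq_left heqc.ge
          have habs : |u x| = B x := by rw [← hfu, hfx]
          exact max_lt (hDUbound habs) (hDVbound (by rw [← heqc, habs]))
    have := hfB s ⟨hs, le_refl s⟩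
    simpa [hf_def, hB_def, hδ_def] using this
  -- pass to the limit ε → 0
  intro t ht
  have hE1 : Real.exp (-((lam1 - mu1) / 2) * t) ≤ 1 := by
    rw [← Real.exp_zero]; apply Real.exp_le_exp.mpr; nlinarith
  have hE0 : 0 < Real.exp (-((lam1 - mu1) / 2) * t) := Real.exp_pos _
  have hexp_eq : Real.exp (-t * (lam1 - mu1) / 2) = Real.exp (-((lam1 - mu1) / 2) * t) := by
    congr 1; ring
  set E : ℝ := Real.exp (-((lam1 - mu1) / 2) * t) with hE_def
  have hmain : ∀ ε' : ℝ, 0 < ε' → max |u t| (4 * x2 t) ≤ 4 * y0 * E + ε' := by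
    intro ε' hε'
    have hth : 0 < (lam1 - mu1) / (32 * (lam1 + lam2)) := by positivity
    set ε : ℝ := min ε' ((lam1 - mu1) / (32 * (lam1 + lam2))) with hε_def
    have hεpos : 0 < ε := lt_min hε' hth
    have hεle : ε ≤ (lam1 - mu1) / (32 * (lam1 + lam2)) := min_le_right _ _
    have hk := key ε hεpos hεle t ht
    have hεE : ε * E ≤ ε' := by
      calc ε * E ≤ ε * 1 := mul_le_mul_of_nonneg_left hE1 hεpos.le
        _ = ε := mul_one ε
        _ ≤ ε' := min_le_left _ _
    calc max |u t| (4 * x2 t) ≤ (4 * y0 + ε) * E := hk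
      _ = 4 * y0 * E + ε * E := by ring
      _ ≤ 4 * y0 * E + ε' := by linarith
  have hmax : max |u t| (4 * x2 t) ≤ 4 * y0 * E :=
    le_of_forall_pos_le_add hmain
  constructor
  · have h1 : |u t| ≤ 4 * y0 * E := le_trans (le_max_left _ _) hmax
    rw [hexp_eq]
    exact h1
  · have h2 : 4 * x2 t ≤ 4 * y0 * E := le_trans (le_max_right _ _) hmax
    rw [hexp_eq]
    nlinarith [mul_nonneg hy0nn hE0.le]
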